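/- Let H be a Hilbert space with orthonormal basis (e_i) and let G = (e₁, e₁, e₂, e₃, e₄, …). Then every sequence (f_i) in H satisfying f = Σᵢ ⟨f, gᵢ⟩ fᵢ for all f ∈ H has the form (w, e₁ − w, e₂, e₃, e₄, …) for some w ∈ H, and every such sequence is a frame for H. -/

import Mathlib

open scoped RealInnerProductSpace

set_option maxHeartbeats 1000000 in
/-- For `G = (e₁, e₁, e₂, e₃, e₄, …)`, every synthesis-pseudo-dual of `G` has the form
`(w, e₁ − w, e₂, e₃, …)`, and every sequence of this form is a frame for `H`. -/
theorem stmt_14 (H : Type*) [NormedAddCommGroup H] [InnerProductSpace ℝ H]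
    (e : HilbertBasis ℕ ℝ H) (g : ℕ → H)
    (hg : g 0 = e 0 ∧ g 1 = e 0 ∧ ∀ k : ℕ, g (k + 2) = e (k + 1)) :
    (∀ F : ℕ → H,
      (∀ f : H, Filter.Tendsto (fun n => ∑ i ∈ Finset.range n, ⟪f, g i⟫ • F i)
        Filter.atTop (nhds f)) →
      ∃ w : H, F 0 = w ∧ F 1 = e 0 - w ∧ ∀ k : ℕ, F (k + 2) = e (k + 1)) ∧
    (∀ F : ℕ → H,
      (∃ w : H, F 0 = w ∧ F 1 = e 0 - w ∧ ∀ k : ℕ, F (k + 2) = e (k + 1)) →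
      ∃ A B : ℝ, 0 < A ∧ 0 < B ∧ ∀ f : H,
        Summable (fun i => ⟪f, F i⟫ ^ 2) ∧
        A * ‖f‖ ^ 2 ≤ ∑' i, ⟪f, F i⟫ ^ 2 ∧ ∑' i, ⟪f, F i⟫ ^ 2 ≤ B * ‖f‖ ^ 2) := by
  obtain ⟨hg0, hg1, hg2⟩ := hg
  have horth := orthonormal_iff_ite.mp e.orthonormal
  constructor
  · intro F hF
    refine ⟨F 0, rfl, ?_, ?_⟩
    · have h1 : Filter.Tendsto (fun n => ∑ i ∈ Finset.range n, ⟪(e 0 : H), g i⟫ • F i)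
        Filter.atTop (nhds (F 0 + F 1)) := by
        have key : ∀ n, 2 ≤ n → ∑ i ∈ Finset.range n, ⟪(e 0 : H), g i⟫ • F i = F 0 + F 1 := by
          intro n hn
          rw [← Finset.sum_subset (Finset.range_subset_range.mpr hn)]
          · simp [Finset.sum_range_succ, hg0, hg1, horth, e.orthonormal.1]
          · intro i _ hi
            simp only [Finset.mem_range, not_lt] at hi
            obtain ⟨k, rfl⟩ : ∃ k, i = k + 2 := ⟨i - 2, by omega⟩
            rw [hg2 k, horth 0 (k + 1)]
            simp
        refine Filter.Tendsto.congr' ?_ tendsto_const_nhds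
        filter_upwards [Filter.eventually_ge_atTop 2] with n hn
        exact (key n hn).symm
      have h2 := tendsto_nhds_unique (hF (e 0)) h1
      rw [h2]; abel
    · intro k
      have h1 : Filter.Tendsto (fun n => ∑ i ∈ Finset.range n, ⟪(e (k + 1) : H), g i⟫ • F i)
        Filter.atTop (nhds (F (k + 2))) := by
        have key : ∀ n, k + 3 ≤ n →
            ∑ i ∈ Finset.range n, ⟪(e (k + 1) : H), g i⟫ • F i = F (k + 2) := by
          intro n hn
          rw [Finset.sum_eq_single_of_mem (k + 2) (Finset.mem_range.mpr (by omega))]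
          · rw [hg2 k, horth (k + 1) (k + 1)]; simp
          · intro i _ hi
            match i, hi with
            | 0, _ => rw [hg0, horth (k + 1) 0]; simp
            | 1, _ => rw [hg1, horth (k + 1) 0]; simp
            | (j + 2), hi =>
              rw [hg2 j, horth (k + 1) (j + 1)]
              have : k + 1 ≠ j + 1 := by omega
              simp [this, show k ≠ j by omega]
        refine Filter.Tendsto.congr' ?_ tendsto_const_nhds
        filter_upwards [Filter.eventually_ge_atTop (k + 3)] with n hn
        exact (key n hn).symm
      exact (tendsto_nhds_unique (hF (e (k + 1))) h1).symm
  · rintro F ⟨w, hF0, hF1, hF2⟩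
    refine ⟨1 / 2, 1 + ‖w‖ ^ 2 + ‖e 0 - w‖ ^ 2, by norm_num, by positivity, fun f => ?_⟩
    have hsum_e : Summable (fun i => ⟪f, e i⟫ ^ 2) := by
      have := e.summable_inner_mul_inner f f
      refine this.congr fun i => ?_
      rw [real_inner_comm (e i) f, sq]
    have htsum_e : ∑' i, ⟪f, e i⟫ ^ 2 = ‖f‖ ^ 2 := by
      have := e.tsum_inner_mul_inner f f
      rw [real_inner_self_eq_norm_sq] at this
      rw [← this]
      exact tsum_congr fun i => by rw [real_inner_comm (e i) f, sq]
    have hsum_tail : Summable (fun k => ⟪f, e (k + 1)⟫ ^ 2) :=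
      (summable_nat_add_iff 1).mpr hsum_e
    have hsum_F : Summable (fun i => ⟪f, F i⟫ ^ 2) := by
      apply (summable_nat_add_iff 2).mp
      exact hsum_tail.congr fun k => by rw [hF2 k]
    have htail_eq : ∑' k, ⟪f, F (k + 2)⟫ ^ 2 = ∑' k, ⟪f, e (k + 1)⟫ ^ 2 :=
      tsum_congr fun k => by rw [hF2 k]
    have hsplit : ∑' i, ⟪f, F i⟫ ^ 2
        = ⟪f, w⟫ ^ 2 + ⟪f, e 0 - w⟫ ^ 2 + ∑' k, ⟪f, e (k + 1)⟫ ^ 2 := by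
      rw [Summable.tsum_eq_zero_add hsum_F, Summable.tsum_eq_zero_add ((summable_nat_add_iff 1).mpr hsum_F),
        hF0, hF1]
      have : ∑' k, ⟪f, F (k + 1 + 1)⟫ ^ 2 = ∑' k, ⟪f, e (k + 1)⟫ ^ 2 :=
        tsum_congr fun k => by rw [hF2 k]
      rw [this]; ring
    have hnorm : ‖f‖ ^ 2 = ⟪f, e 0⟫ ^ 2 + ∑' k, ⟪f, e (k + 1)⟫ ^ 2 := by
      rw [← htsum_e, Summable.tsum_eq_zero_add hsum_e]
    have hT : (0 : ℝ) ≤ ∑' k, ⟪f, e (k + 1)⟫ ^ 2 :=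
      tsum_nonneg fun k => sq_nonneg _
    have hdecomp : ⟪f, e 0⟫ = ⟪f, w⟫ + ⟪f, e 0 - w⟫ := by
      rw [inner_sub_right]; ring
    refine ⟨hsum_F, ?_, ?_⟩
    · rw [hsplit]
      have hc : ⟪f, e 0⟫ ^ 2 = (⟪f, w⟫ + ⟪f, e 0 - w⟫) ^ 2 := by rw [hdecomp]
      nlinarith [sq_nonneg (⟪f, w⟫ - ⟪f, e 0 - w⟫)]
    · rw [hsplit]
      have hcs1 := real_inner_mul_inner_self_le f w
      have hcs2 := real_inner_mul_inner_self_le f (e 0 - w)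
      simp only [real_inner_self_eq_norm_sq] at hcs1 hcs2
      rw [← sq] at hcs1 hcs2
      have hT2 : ∑' k, ⟪f, e (k + 1)⟫ ^ 2 ≤ ‖f‖ ^ 2 := by
        have := sq_nonneg ⟪f, e 0⟫
        linarith
      calc ⟪f, w⟫ ^ 2 + ⟪f, e 0 - w⟫ ^ 2 + ∑' k, ⟪f, e (k + 1)⟫ ^ 2
          ≤ ‖f‖ ^ 2 * ‖w‖ ^ 2 + ‖f‖ ^ 2 * ‖e 0 - w‖ ^ 2 + ‖f‖ ^ 2 := by linarith
        _ = (1 + ‖w‖ ^ 2 + ‖e 0 - w‖ ^ 2) * ‖f‖ ^ 2 := by ring
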